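/- Let S be a semigroup and let p be a regular strongly productive ultrafilter on S. Then p is idempotent, i.e. p·p = p. -/

import Mathlib

/- Semigroup structure on ultrafilters: `A ∈ p * q ↔ {x | {y | x * y ∈ A} ∈ q} ∈ p`. -/
attribute [local instance] Ultrafilter.semigroup

/-- `FP x` (from Mathlib's `Hindman.FP`) is the set of products `∏_{i ∈ a} x i`, taken in
increasing order of indices, where `a` ranges over finite nonempty subsets of `ℕ`.
An ultrafilter `p` on a semigroup `S` is *strongly productive* if every member of `p` contains
a set of the form `FP x` that itself belongs to `p`. -/
def StronglyProductive {S : Type*} [Semigroup S] (p : Ultrafilter S) : Prop :=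
  ∀ A ∈ p, ∃ x : Stream' S, Hindman.FP x ⊆ A ∧ Hindman.FP x ∈ p

/-- A (nonprincipal strongly productive) ultrafilter `p` is *regular* if some `B ∈ p` has the
property that for every sequence `x` with `FP x ⊆ B`, the set `x₀ · FP₁ x` is not in `p`. -/
def RegularSP {S : Type*} [Semigroup S] (p : Ultrafilter S) : Prop :=
  ∃ B ∈ p, ∀ x : Stream' S, Hindman.FP x ⊆ B →
    (x.head * ·) '' Hindman.FP x.tail ∉ p

/-- A regular (nonprincipal) strongly productive ultrafilter on a semigroup is idempotent. -/
theorem regular_stronglyProductive_isIdempotent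
    {S : Type*} [Semigroup S] (p : Ultrafilter S)
    (hsp : StronglyProductive p) (hnp : ∀ a : S, p ≠ pure a) (hreg : RegularSP p) :
    p * p = p := by
  have ⟨B, hB, hBreg⟩ := hreg
  -- Key: if FP x ∈ p and FP x ⊆ B then FP (tail x) ∈ p
  have key : ∀ x : Stream' S, Hindman.FP x ⊆ B → Hindman.FP x ∈ p →
      Hindman.FP x.tail ∈ p := by
    intro x hxB hxp
    have hsub : Hindman.FP x ⊆ {x.head} ∪ (Hindman.FP x.tail ∪
        (x.head * ·) '' Hindman.FP x.tail) := by
      intro m hm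
      induction hm with
      | head' a => exact Or.inl rfl
      | tail' a m h _ => exact Or.inr (Or.inl h)
      | cons' a m h _ => exact Or.inr (Or.inr ⟨m, h, rfl⟩)
    have hu : {x.head} ∪ (Hindman.FP x.tail ∪
        (x.head * ·) '' Hindman.FP x.tail) ∈ p := p.mem_of_superset hxp hsub
    rcases (Ultrafilter.union_mem_iff.mp hu) with h1 | h2
    · exact absurd (Ultrafilter.coe_le_coe.mp (Filter.le_pure_iff.mpr h1)) (hnp x.head)
    · rcases Ultrafilter.union_mem_iff.mp h2 with h3 | h4
      · exact h3
      · exact absurd h4 (hBreg x hxB)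
  -- hence FP (drop n x) ∈ p for all n
  have hdrop : ∀ (x : Stream' S), Hindman.FP x ⊆ B → Hindman.FP x ∈ p →
      ∀ n, Hindman.FP (x.drop n) ∈ p := by
    intro x hxB hxp n
    induction n with
    | zero => exact hxp
    | succ n ih =>
        have hsubB : Hindman.FP (x.drop n) ⊆ B :=
          fun m hm => hxB (Hindman.FP_drop_subset_FP x n hm)
        have := key (x.drop n) hsubB ih
        rwa [Stream'.tail_drop'] at this
  -- now show p ≤ p * p as filters (every A ∈ p is in p * p)
  have hle : (↑(p * p) : Filter S) ≤ ↑p := by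
    intro A hA
    obtain ⟨x, hxA, hxp⟩ := hsp (A ∩ B) (Filter.inter_mem hA hB)
    have hxB : Hindman.FP x ⊆ B := fun m hm => (hxA hm).2
    have hxA' : Hindman.FP x ⊆ A := fun m hm => (hxA hm).1
    have : ∀ᶠ m in ↑p, ∀ᶠ m' in ↑p, m * m' ∈ A := by
      apply Filter.mem_of_superset hxp
      intro m hm
      obtain ⟨n, hn⟩ := Hindman.FP.mul hm
      exact Filter.mem_of_superset (hdrop x hxB hxp n)
        fun m' hm' => hxA' (hn m' hm')
    exact (Ultrafilter.eventually_mul p p (· ∈ A)).mpr this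
  exact Ultrafilter.coe_le_coe.mp hle
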